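/- Let E be an all-reflexive directed graph and let (H,S) be a reflexive admissible pair of E (so that S = B_H). Then the quotient graph E/(H,S), namely the graph with vertex set E⁰ − H and edge set {e ∈ E¹ : r(e) ∉ H} (with the source and range maps inherited from E), is all-reflexive. -/

import Mathlib

namespace GraphAnn

variable {V E : Type*}

/-- `u ≥ v`: there is a (possibly trivial) path from `u` to `v`. -/
def Reach (s r : E → V) : V → V → Prop :=
  Relation.ReflTransGen (fun a b => ∃ e, s e = a ∧ r e = b)

/-- The root `R(W)` of a set of vertices. -/
def Root (s r : E → V) (W : Set V) : Set V :=
  {u | ∃ v ∈ W, Reach s r u v}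

def Hereditary (s r : E → V) (H : Set V) : Prop :=
  ∀ u v, u ∈ H → Reach s r u v → v ∈ H

def IsSink (s : E → V) (v : V) : Prop := ∀ e : E, s e ≠ v

def IsInfiniteEmitter (s : E → V) (v : V) : Prop := {e : E | s e = v}.Infinite

def IsRegular (s : E → V) (v : V) : Prop := ¬ IsSink s v ∧ ¬ IsInfiniteEmitter s v

def Saturated (s r : E → V) (H : Set V) : Prop :=
  ∀ v, IsRegular s v → (∀ e : E, s e = v → r e ∈ H) → v ∈ H

/-- `V⊥ = E⁰ − R(V)`. -/
def perp (s r : E → V) (W : Set V) : Set V := {v | v ∉ Root s r W}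

/-- Breaking vertices `B_H`. -/
def Breaking (s r : E → V) (H : Set V) : Set V :=
  {v | v ∉ H ∧ IsInfiniteEmitter s v ∧
    {e : E | s e = v ∧ r e ∉ H}.Nonempty ∧ {e : E | s e = v ∧ r e ∉ H}.Finite}

/-- `(H,S)` is an admissible pair. -/
def Admissible (s r : E → V) (H S : Set V) : Prop :=
  Hereditary s r H ∧ Saturated s r H ∧ S ⊆ Breaking s r H

/-- `S⊥ = B_{H⊥} − S`. -/
def Sperp (s r : E → V) (H S : Set V) : Set V := Breaking s r (perp s r H) \ S

/-- A cycle: a closed path of positive length in which distinct edges have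
distinct sources. -/
structure GCycle (s r : E → V) where
  edges : List E
  ne : edges ≠ []
  chain : edges.Chain' (fun e f => r e = s f)
  closed : r (edges.getLast ne) = s (edges.head ne)
  srcNodup : (edges.map s).Nodup

/-- The vertex set `c⁰` of a cycle. -/
def GCycle.verts {s r : E → V} (c : GCycle s r) : Set V :=
  {v | ∃ e ∈ c.edges, s e = v}

/-- A cycle has an exit. -/
def GCycle.HasExit {s r : E → V} (c : GCycle s r) : Prop :=
  ∃ e, s e ∈ c.verts ∧ e ∉ c.edges

/-- An extreme cycle: it has an exit and every exit returns. -/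
def GCycle.Extreme {s r : E → V} (c : GCycle s r) : Prop :=
  c.HasExit ∧ ∀ v ∈ c.verts, ∀ w, Reach s r v w → ∃ u ∈ c.verts, Reach s r w u

/-- The vertex set `α⁰` of an infinite path `α`. -/
def InfPathVerts (s : E → V) (α : ℕ → E) : Set V := {v | ∃ n, s (α n) = v}

/-- Conditions (a), (b), (c): the graph is all-reflexive. -/
def AllReflexiveGraph (s r : E → V) : Prop :=
  (∀ c : GCycle s r, ¬ c.HasExit ∨ c.Extreme) ∧
  (∀ v, IsInfiniteEmitter s v → ∃ c : GCycle s r, v ∈ c.verts) ∧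
  (∀ α : ℕ → E, (∀ n, r (α n) = s (α (n + 1))) →
    {e : E | s e ∈ InfPathVerts s α ∧ r e ∉ Root s r (InfPathVerts s α)}.Finite)

section Aux

variable {s r : E → V} {H : Set V}
  {s' r' : {e : E // r e ∉ H} → {v : V // v ∉ H}}

lemma reach_proj (hs : ∀ e, (s' e : V) = s e.1) (hr : ∀ e, (r' e : V) = r e.1)
    {u v : {v : V // v ∉ H}} (h : Reach s' r' u v) :
    Reach s r u.1 v.1 := by
  induction h with
  | refl => exact .refl
  | tail _ hbc ih =>
    obtain ⟨e, h1, h2⟩ := hbc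
    exact ih.tail ⟨e.1, by rw [← hs e, h1], by rw [← hr e, h2]⟩

lemma reach_lift (hs : ∀ e, (s' e : V) = s e.1) (hr : ∀ e, (r' e : V) = r e.1)
    (hH : Hereditary s r H) {u v : V} (h : Reach s r u v) :
    ∀ (hu : u ∉ H) (hv : v ∉ H), Reach s' r' ⟨u, hu⟩ ⟨v, hv⟩ := by
  induction h with
  | refl => intro _ _; exact .refl
  | @tail b c hab hbc ih =>
    intro hu hv
    obtain ⟨e, h1, h2⟩ := hbc
    have hb : b ∉ H := fun hbH =>
      hv (hH b c hbH (Relation.ReflTransGen.single ⟨e, h1, h2⟩))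
    refine (ih hu hb).tail ⟨⟨e, by rw [h2]; exact hv⟩, Subtype.ext ?_, Subtype.ext ?_⟩
    · rw [hs]; exact h1
    · rw [hr]; exact h2

lemma chain_reach (l : List E) (hl : l.Chain' fun e f => r e = s f)
    (i j : ℕ) (hij : i ≤ j) :
    ∀ (hj : j < l.length),
      Reach s r (s (l[i]'(lt_of_le_of_lt hij hj))) (s l[j]) := by
  induction j, hij using Nat.le_induction with
  | base => intro hj; exact .refl
  | succ j hij ih =>
    intro hj
    have hjl : j < l.length := Nat.lt_of_succ_lt hj
    have hstep := List.isChain_iff_getElem.mp hl j (by omega)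
    exact (ih hjl).tail ⟨l[j], rfl, hstep⟩

lemma cycle_reach (c : GCycle s r) {u w : V} (hu : u ∈ c.verts) (hw : w ∈ c.verts) :
    Reach s r u w := by
  obtain ⟨e, he, hse⟩ := hu
  obtain ⟨f, hf, hsf⟩ := hw
  obtain ⟨i, hil, hie⟩ := List.mem_iff_getElem.mp he
  obtain ⟨j, hjl, hjf⟩ := List.mem_iff_getElem.mp hf
  subst hse hsf hie hjf
  rcases le_or_gt i j with hij | hji
  · exact chain_reach c.edges c.chain i j hij hjl
  · have h1 : Reach s r (s c.edges[i]) (s (c.edges[c.edges.length - 1]'(by omega))) :=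
      chain_reach c.edges c.chain i (c.edges.length - 1) (by omega) (by omega)
    have hlast : c.edges.getLast c.ne = c.edges[c.edges.length - 1]'(by omega) :=
      List.getLast_eq_getElem c.ne
    have hhead : c.edges.head c.ne = c.edges[0]'(by omega) :=
      List.head_eq_getElem c.ne
    have h2 : Reach s r (s c.edges[i]) (s (c.edges[0]'(by omega))) := by
      refine h1.tail ⟨c.edges[c.edges.length - 1]'(by omega), rfl, ?_⟩
      rw [← hlast, ← hhead]; exact c.closed
    exact h2.trans (chain_reach c.edges c.chain 0 j (Nat.zero_le j) hjl)

lemma cycle_range_mem (c : GCycle s r) {e : E} (he : e ∈ c.edges) :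
    r e ∈ c.verts := by
  obtain ⟨i, hil, hie⟩ := List.mem_iff_getElem.mp he
  subst hie
  rcases lt_or_ge (i + 1) c.edges.length with hlt | hge
  · have hstep := List.isChain_iff_getElem.mp c.chain i (by omega)
    exact ⟨c.edges[i+1], List.getElem_mem hlt, hstep.symm⟩
  · have hlast : c.edges.getLast c.ne = c.edges[i]'hil := by
      rw [List.getLast_eq_getElem]; congr 1; omega
    refine ⟨c.edges.head c.ne, List.head_mem c.ne, ?_⟩
    rw [← hlast]; exact c.closed.symm

/-- Lift a cycle of `E` all of whose edge ranges avoid `H` to the quotient. -/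
def liftCycle (hs : ∀ e, (s' e : V) = s e.1) (hr : ∀ e, (r' e : V) = r e.1)
    (c : GCycle s r) (hre : ∀ e ∈ c.edges, r e ∉ H) : GCycle s' r' where
  edges := c.edges.pmap (fun e h => (⟨e, h⟩ : {e : E // r e ∉ H})) hre
  ne := by
    simp only [ne_eq, List.pmap_eq_nil_iff]
    exact c.ne
  chain := by
    have hc := c.chain
    unfold List.Chain' at hc ⊢
    rw [List.isChain_iff_getElem] at hc ⊢
    intro i hi
    simp only [List.get_eq_getElem, List.getElem_pmap]
    refine Subtype.ext ?_
    rw [hr, hs]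
    simp only [List.length_pmap] at hi
    have := hc i (by simpa using hi)
    simpa using this
  closed := by
    refine Subtype.ext ?_
    rw [hr, hs]
    simp only [List.getLast_pmap, List.head_pmap]
    exact c.closed
  srcNodup := by
    refine List.Nodup.of_map Subtype.val ?_
    have h1 : ((c.edges.pmap (fun e h => (⟨e, h⟩ : {e : E // r e ∉ H})) hre).map s').map
        Subtype.val = c.edges.map s := by
      apply List.ext_getElem
      · simp
      · intro i h1 h2
        simp only [List.getElem_map, List.getElem_pmap]
        rw [hs]
    rw [h1]
    exact c.srcNodup

lemma liftCycle_edges (hs : ∀ e, (s' e : V) = s e.1) (hr : ∀ e, (r' e : V) = r e.1)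
    (c : GCycle s r) (hre : ∀ e ∈ c.edges, r e ∉ H) :
    (liftCycle hs hr c hre).edges.map Subtype.val = c.edges := by
  simp [liftCycle, List.map_pmap]

/-- Project a cycle of the quotient to a cycle of `E`. -/
def projCycle (hs : ∀ e, (s' e : V) = s e.1) (hr : ∀ e, (r' e : V) = r e.1)
    (c : GCycle s' r') : GCycle s r where
  edges := c.edges.map Subtype.val
  ne := fun hnil => c.ne (List.map_eq_nil_iff.mp hnil)
  chain := by
    unfold List.Chain'
    rw [List.isChain_map]
    refine c.chain.imp ?_
    intro e f hef
    rw [← hs, ← hr, hef]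
  closed := by
    rw [List.getLast_map, List.head_map, ← hs, ← hr, c.closed]
  srcNodup := by
    have h1 : (c.edges.map Subtype.val).map s = (c.edges.map s').map Subtype.val := by
      simp only [List.map_map]
      exact List.map_congr_left fun e _ => (hs e).symm
    rw [h1]
    exact c.srcNodup.map Subtype.val_injective

end Aux

/-- If `E` is all-reflexive and `(H,S)` is a reflexive admissible pair, then
the quotient graph `E/(H,S)` (with vertex set `E⁰ − H` and edges
`{e : r(e) ∉ H}`, source and range inherited from `E`) is all-reflexive. -/
theorem quotient_all_reflexive (s r : E → V)
    (hAll : AllReflexiveGraph s r)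
    (H S : Set V) (h : Admissible s r H S)
    (hrefl : H = perp s r (perp s r H) ∧
      S = Sperp s r (perp s r H) (Sperp s r H S))
    (s' r' : {e : E // r e ∉ H} → {v : V // v ∉ H})
    (hs : ∀ e, (s' e : V) = s e.1) (hr : ∀ e, (r' e : V) = r e.1) :
    AllReflexiveGraph s' r' := by
  obtain ⟨hHer, -, -⟩ := h
  refine ⟨?_, ?_, ?_⟩
  · -- (a) cycles with an exit are extreme
    intro c'
    by_cases hex : c'.HasExit
    · right
      -- the projected cycle has an exit, hence is extreme
      set c := projCycle hs hr c' with hc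
      obtain ⟨e', he'v, he'c⟩ := hex
      have hexproj : c.HasExit := by
        obtain ⟨f', hf', hsf'⟩ := he'v
        refine ⟨e'.1, ⟨f'.1, List.mem_map_of_mem (f := Subtype.val) hf', ?_⟩, ?_⟩
        · rw [← hs, hsf', hs]
        · intro hmem
          obtain ⟨g', hg', hgv⟩ := List.mem_map.mp hmem
          exact he'c (Subtype.val_injective hgv ▸ hg')
      have hcext : c.Extreme := (hAll.1 c).resolve_left (fun hn => hn hexproj)
      refine ⟨⟨e', he'v, he'c⟩, ?_⟩
      intro v hv w hw
      have hv1 : v.1 ∈ c.verts := by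
        obtain ⟨f', hf', hsf'⟩ := hv
        exact ⟨f'.1, List.mem_map_of_mem (f := Subtype.val) hf', by rw [← hs, hsf']⟩
      obtain ⟨u, huc, hwu⟩ := hcext.2 v.1 hv1 w.1 (reach_proj hs hr hw)
      obtain ⟨f, hf, hsf⟩ := huc
      obtain ⟨g', hg', hgv⟩ := List.mem_map.mp hf
      have huH : u ∉ H := by
        rw [← hsf, ← hgv, ← hs g']
        exact (s' g').2
      refine ⟨⟨u, huH⟩, ⟨g', hg', Subtype.ext (by rw [hs, hgv, hsf])⟩, ?_⟩
      have := reach_lift hs hr hHer hwu w.2 huH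
      simpa using this
    · left; exact hex
  · -- (b) infinite emitters lie on cycles
    intro v hv
    have hv1 : IsInfiniteEmitter s v.1 := by
      have himg : Set.InjOn Subtype.val {e' : {e : E // r e ∉ H} | s' e' = v} :=
        Subtype.val_injective.injOn
      have : (Subtype.val '' {e' : {e : E // r e ∉ H} | s' e' = v}).Infinite :=
        hv.image himg
      refine this.mono ?_
      rintro e ⟨e', he', rfl⟩
      rw [Set.mem_setOf_eq, ← hs, he']
    obtain ⟨c, hvc⟩ := hAll.2.1 v.1 hv1
    have hre : ∀ e ∈ c.edges, r e ∉ H := by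
      intro e he hreH
      exact v.2 (hHer _ _ hreH (cycle_reach c (cycle_range_mem c he) hvc))
    refine ⟨liftCycle hs hr c hre, ?_⟩
    obtain ⟨f, hf, hsf⟩ := hvc
    have : f ∈ (liftCycle hs hr c hre).edges.map Subtype.val := by
      rw [liftCycle_edges]; exact hf
    obtain ⟨f', hf', hfv⟩ := List.mem_map.mp this
    exact ⟨f', hf', Subtype.ext (by rw [hs, hfv, hsf])⟩
  · -- (c) condition on infinite paths
    intro α' hα'
    set α : ℕ → E := fun n => (α' n).1 with hα
    have hchain : ∀ n, r (α n) = s (α (n + 1)) := by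
      intro n
      rw [hα]
      simp only
      rw [← hr, ← hs, hα' n]
    have hfin := hAll.2.2 α hchain
    have hsub : {e' : {e : E // r e ∉ H} |
        s' e' ∈ InfPathVerts s' α' ∧ r' e' ∉ Root s' r' (InfPathVerts s' α')} ⊆
        Subtype.val ⁻¹' {e : E | s e ∈ InfPathVerts s α ∧
          r e ∉ Root s r (InfPathVerts s α)} := by
      rintro e' ⟨⟨n, hn⟩, hroot⟩
      refine ⟨⟨n, ?_⟩, ?_⟩
      · rw [← hs, hn, hs]
      · rintro ⟨u, ⟨m, hm⟩, hreach⟩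
        have huH : u ∉ H := by rw [← hm, ← hs]; exact (s' (α' m)).2
        refine hroot ⟨⟨u, huH⟩, ⟨m, Subtype.ext (by rw [hs, hm])⟩, ?_⟩
        have hr'e : r' e' = ⟨r e'.1, e'.2⟩ := Subtype.ext (by rw [hr])
        rw [hr'e]
        exact reach_lift hs hr hHer hreach e'.2 huH
    exact (hfin.preimage Subtype.val_injective.injOn).subset hsub


end GraphAnn
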